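/- arXiv:1512.06763 — 2 statements merged into one kernel-verified Lean document; each statement's English description precedes it below -/
import Mathlib

section
/- Let z : ℝ → ℝ be a solution of z' = A(t)z + B(t)z² with A = a + c, B = b + d, where a, b, c, d are continuous. Define x(t) = β·exp(∫₀ᵗ (a(s) + b(s)z(s)) ds) and y(t) = γ·exp(∫₀ᵗ (c(s) + d(s)z(s)) ds) for constants β, γ with β·γ·exp-product equal to z (i.e., x(t)y(t) = z(t) for all t, which holds when βγ = z(0)). Then (x, y) solves the homogeneous coupled system x' = a x + b x² y, y' = c y + d y² x. -/
private lemma ftc_aux {f : ℝ → ℝ} (hf : Continuous f) (t : ℝ) :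
    HasDerivAt (fun u => ∫ s in (0:ℝ)..u, f s) (f t) t :=
  intervalIntegral.integral_hasDerivAt_right (hf.intervalIntegrable 0 t)
    (hf.stronglyMeasurableAtFilter _ _) hf.continuousAt

theorem stmt_2 (a b c d z : ℝ → ℝ)
    (ha : Continuous a) (hb : Continuous b) (hc : Continuous c) (hd : Continuous d)
    (hzc : Continuous z)
    (hz : ∀ t, HasDerivAt z ((a t + c t) * z t + (b t + d t) * z t ^ 2) t)
    (β γ : ℝ) (hβγ : β * γ = z 0)
    (x y : ℝ → ℝ)
    (hx : ∀ t, x t = β * Real.exp (∫ s in (0:ℝ)..t, (a s + b s * z s)))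
    (hy : ∀ t, y t = γ * Real.exp (∫ s in (0:ℝ)..t, (c s + d s * z s))) :
    ∀ t, HasDerivAt x (a t * x t + b t * x t ^ 2 * y t) t ∧
      HasDerivAt y (c t * y t + d t * y t ^ 2 * x t) t := by
  set f1 : ℝ → ℝ := fun s => a s + b s * z s with hf1
  set f2 : ℝ → ℝ := fun s => c s + d s * z s with hf2
  have hf1c : Continuous f1 := ha.add (hb.mul hzc)
  have hf2c : Continuous f2 := hc.add (hd.mul hzc)
  set F1 : ℝ → ℝ := fun u => ∫ s in (0:ℝ)..u, f1 s with hF1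
  set F2 : ℝ → ℝ := fun u => ∫ s in (0:ℝ)..u, f2 s with hF2
  have hF1d : ∀ t, HasDerivAt F1 (f1 t) t := fun t => ftc_aux hf1c t
  have hF2d : ∀ t, HasDerivAt F2 (f2 t) t := fun t => ftc_aux hf2c t
  -- the combined function
  have hg : ∀ t, HasDerivAt (fun u => z u * Real.exp (-(F1 u + F2 u))) 0 t := by
    intro t
    have hE : HasDerivAt (fun u => Real.exp (-(F1 u + F2 u)))
        (Real.exp (-(F1 t + F2 t)) * (-(f1 t + f2 t))) t :=
      (((hF1d t).add (hF2d t)).neg).exp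
    have := (hz t).mul hE
    refine this.congr_deriv ?_
    simp only [hf1, hf2]
    ring
  have hgconst : ∀ t, z t * Real.exp (-(F1 t + F2 t)) = z 0 := by
    intro t
    have hdiff : Differentiable ℝ (fun u => z u * Real.exp (-(F1 u + F2 u))) :=
      fun u => ((hg u).differentiableAt)
    have hderiv : ∀ u, deriv (fun u => z u * Real.exp (-(F1 u + F2 u))) u = 0 :=
      fun u => (hg u).deriv
    have h := is_const_of_deriv_eq_zero hdiff hderiv t 0
    have h0 : F1 0 = 0 := by simp [hF1]
    have h02 : F2 0 = 0 := by simp [hF2]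
    simpa [h0, h02] using h
  have hzt : ∀ t, z t = z 0 * Real.exp (F1 t + F2 t) := by
    intro t
    calc z t = z t * Real.exp (-(F1 t + F2 t)) * Real.exp (F1 t + F2 t) := by
          have harg : -(F1 t + F2 t) + (F1 t + F2 t) = 0 := by ring
          rw [mul_assoc, ← Real.exp_add, harg, Real.exp_zero, mul_one]
      _ = z 0 * Real.exp (F1 t + F2 t) := by rw [hgconst t]
  have hxy : ∀ t, x t * y t = z t := by
    intro t
    rw [hx t, hy t, hzt t, ← hβγ]
    show β * Real.exp (F1 t) * (γ * Real.exp (F2 t)) = β * γ * Real.exp (F1 t + F2 t)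
    rw [Real.exp_add]; ring
  intro t
  have hxd : HasDerivAt x (f1 t * x t) t := by
    have : HasDerivAt (fun u => β * Real.exp (F1 u)) (β * Real.exp (F1 t) * f1 t) t := by
      have := ((hF1d t).exp).const_mul β
      exact this.congr_deriv (by ring)
    have hxe : x = fun u => β * Real.exp (F1 u) := funext hx
    rw [hxe]
    convert this using 1
    show f1 t * (β * Real.exp (F1 t)) = _
    ring
  have hyd : HasDerivAt y (f2 t * y t) t := by
    have : HasDerivAt (fun u => γ * Real.exp (F2 u)) (γ * Real.exp (F2 t) * f2 t) t := by
      have := ((hF2d t).exp).const_mul γ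
      exact this.congr_deriv (by ring)
    have hye : y = fun u => γ * Real.exp (F2 u) := funext hy
    rw [hye]
    convert this using 1
    show f2 t * (γ * Real.exp (F2 t)) = _
    ring
  constructor
  · convert hxd using 1
    simp only [hf1]
    calc a t * x t + b t * x t ^ 2 * y t
        = a t * x t + b t * (x t * y t) * x t := by ring
      _ = (a t + b t * z t) * x t := by rw [hxy t]; ring
  · convert hyd using 1
    simp only [hf2]
    calc c t * y t + d t * y t ^ 2 * x t
        = c t * y t + d t * (x t * y t) * y t := by ring
      _ = (c t + d t * z t) * y t := by rw [hxy t]; ring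
end

section
/- Suppose b(t) = d(t) for all t, and g(t)/f(t) = λ·exp(∫₀ᵗ (c(s) − a(s)) ds) for some constant λ (with f nonvanishing). Set φ(t) = g(t)/f(t). If x : ℝ → ℝ solves the Abel equation x' = f(t) + a(t)x + b(t)φ(t)x³, then the pair (x, y) with y(t) = φ(t)x(t) solves the non-homogeneous coupled system x' = a x + b x² y + f, y' = c y + d y² x + g. -/
theorem stmt_3 (a b c d f g : ℝ → ℝ) (φ : ℝ → ℝ) (lam : ℝ)
    (ha : Continuous a) (hc : Continuous c)
    (hbd : ∀ t, b t = d t) (hf : ∀ t, f t ≠ 0)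
    (hφ : ∀ t, φ t = g t / f t)
    (hprop : ∀ t, g t / f t = lam * Real.exp (∫ s in (0:ℝ)..t, (c s - a s)))
    (x : ℝ → ℝ)
    (hx : ∀ t, HasDerivAt x (f t + a t * x t + b t * φ t * x t ^ 3) t) :
    ∀ t, HasDerivAt x (a t * x t + b t * x t ^ 2 * (φ t * x t) + f t) t ∧
      HasDerivAt (fun t => φ t * x t)
        (c t * (φ t * x t) + d t * (φ t * x t) ^ 2 * x t + g t) t := by
  have hφeq : φ = fun t => lam * Real.exp (∫ s in (0:ℝ)..t, (c s - a s)) :=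
    funext fun t => (hφ t).trans (hprop t)
  have hcont : Continuous (fun s => c s - a s) := hc.sub ha
  have hF : ∀ t, HasDerivAt (fun u => ∫ s in (0:ℝ)..u, (c s - a s)) (c t - a t) t := by
    intro t
    exact intervalIntegral.integral_hasDerivAt_right
      (hcont.intervalIntegrable _ _)
      (hcont.stronglyMeasurableAtFilter _ _)
      hcont.continuousAt
  have hφd : ∀ t, HasDerivAt φ ((c t - a t) * φ t) t := by
    intro t
    rw [hφeq]
    have := (((hF t).exp).const_mul lam)
    refine this.congr_deriv ?_
    beta_reduce
    ring
  have hg : ∀ t, g t = φ t * f t := by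
    intro t
    rw [hφ t]
    field_simp
    rw [mul_div_assoc, div_self (hf t), mul_one]
  intro t
  constructor
  · have := hx t
    convert this using 1
    ring
  · have h := (hφd t).mul (hx t)
    refine h.congr_deriv ?_
    rw [hg t, hbd t]
    ring
end
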